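/- Let G be a nilpotent torsion-free group and x, y ∈ G. If xᵗyⁿ = yⁿxᵗ for some nonzero integers t, n, then xy = yx. -/

import Mathlib

/-- Old Mathlib `Monoid.IsTorsionFree` (removed upstream), with its original definition. -/
def Monoid.IsTorsionFree (G : Type*) [Monoid G] : Prop :=
  ∀ g : G, g ≠ 1 → ¬IsOfFinOrder g

private def conjHom {G : Type} [Group G] (y : G) : G →* G where
  toFun v := y⁻¹ * v * y
  map_one' := by group
  map_mul' a b := by group

private lemma eq_one_of_pow_eq_one {G : Type} [Group G] (htf : Monoid.IsTorsionFree G)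
    {a : G} {n : ℕ} (hn : n ≠ 0) (h : a ^ n = 1) : a = 1 := by
  by_contra h1
  exact htf a h1 (isOfFinOrder_iff_pow_eq_one.mpr ⟨n, Nat.pos_of_ne_zero hn, h⟩)

private lemma conj_fixed_of_iterate {G : Type} [Group G] [Group.IsNilpotent G]
    (htf : Monoid.IsTorsionFree G) (y : G) (n : ℕ) (hn : n ≠ 0) (v : G)
    (hv : (conjHom y)^[n] v = v) : conjHom y v = v := by
  obtain ⟨m, hm⟩ := nilpotent_iff_lowerCentralSeries.mp ‹Group.IsNilpotent G›
  suffices H : ∀ k (v : G), v ∈ Subgroup.lowerCentralSeries (⊤ : Subgroup G) (m - k) →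
      (conjHom y)^[n] v = v → conjHom y v = v by
    refine H m v ?_ hv
    rw [Nat.sub_self, lowerCentralSeries_zero]
    exact Subgroup.mem_top v
  intro k
  induction k with
  | zero =>
    intro v hv0 _
    rw [Nat.sub_zero, hm, Subgroup.mem_bot] at hv0
    rw [hv0, map_one]
  | succ k ih =>
    intro v hvmem hfix
    set f := conjHom y with hf
    set h := v⁻¹ * f v with hh
    have hfv : f v = v * h := by rw [hh, mul_inv_cancel_left]
    have hmem : h ∈ Subgroup.lowerCentralSeries (⊤ : Subgroup G) (m - k) := by
      have h1 : h ∈ Subgroup.lowerCentralSeries (⊤ : Subgroup G) ((m - (k + 1)) + 1) := by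
        rw [lowerCentralSeries_succ]
        apply Subgroup.subset_closure
        refine ⟨v⁻¹, inv_mem hvmem, y⁻¹, Subgroup.mem_top _, ?_⟩
        rw [hh, hf]
        show v⁻¹ * y⁻¹ * v⁻¹⁻¹ * y⁻¹⁻¹ = v⁻¹ * (y⁻¹ * v * y)
        group
      exact lowerCentralSeries_antitone _ (by omega) h1
    have hfixn : f^[n] h = h := by
      have h2 : f^[n] (f v) = f v := by
        rw [← Function.iterate_succ_apply, Function.iterate_succ_apply', hfix]
      rw [hh, iterate_map_mul, iterate_map_inv, hfix, h2]
    have hfh : f h = h := ih h hmem hfixn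
    have hiter : ∀ j, f^[j] v = v * h ^ j := by
      intro j
      induction j with
      | zero => simp
      | succ j ihj =>
        rw [Function.iterate_succ_apply', ihj, map_mul, map_pow, hfh, hfv,
          mul_assoc, ← pow_succ']
    have hpow : h ^ n = 1 := by
      have h3 := hiter n
      rw [hfix] at h3
      exact (left_eq_mul.mp h3)
    rw [hfv, eq_one_of_pow_eq_one htf hn hpow, mul_one]

private lemma commute_of_pow_commute_nat {G : Type} [Group G] [Group.IsNilpotent G]
    (htf : Monoid.IsTorsionFree G) (x y : G) (n : ℕ) (hn : n ≠ 0)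
    (hc : Commute x (y ^ n)) : Commute x y := by
  have hiter : ∀ (j : ℕ) (v : G), (conjHom y)^[j] v = (y ^ j)⁻¹ * v * y ^ j := by
    intro j
    induction j with
    | zero => intro v; simp
    | succ j ihj =>
      intro v
      rw [Function.iterate_succ_apply, ihj]
      show (y ^ j)⁻¹ * (y⁻¹ * v * y) * y ^ j = (y ^ (j + 1))⁻¹ * v * y ^ (j + 1)
      rw [pow_succ']
      group
  have hfix : (conjHom y)^[n] x = x := by
    rw [hiter n x]
    rw [mul_assoc, hc.eq, inv_mul_cancel_left]
  have h4 := conj_fixed_of_iterate htf y n hn x hfix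
  have h5 : y⁻¹ * x * y = x := h4
  show x * y = y * x
  calc x * y = y * (y⁻¹ * x * y) := by group
    _ = y * x := by rw [h5]

private lemma commute_of_zpow_commute_right {G : Type} [Group G] [Group.IsNilpotent G]
    (htf : Monoid.IsTorsionFree G) (x y : G) (n : ℤ) (hn : n ≠ 0)
    (hc : Commute x (y ^ n)) : Commute x y := by
  apply commute_of_pow_commute_nat htf x y n.natAbs (Int.natAbs_ne_zero.mpr hn)
  rcases Int.natAbs_eq n with h1 | h1
  · rwa [h1, zpow_natCast] at hc
  · rw [h1, zpow_neg, zpow_natCast] at hc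
    simpa using hc.inv_right

/-- In a torsion-free nilpotent group, commuting of nontrivial powers implies
commuting of the elements. -/
theorem commute_of_zpow_commute (G : Type) [Group G] [Group.IsNilpotent G]
    (htf : Monoid.IsTorsionFree G) (x y : G) (t n : ℤ) (ht : t ≠ 0) (hn : n ≠ 0)
    (h : x ^ t * y ^ n = y ^ n * x ^ t) : x * y = y * x := by
  have hc1 : Commute (x ^ t) (y ^ n) := h
  have hc2 : Commute (x ^ t) y := commute_of_zpow_commute_right htf _ y n hn hc1
  have hc3 : Commute y x := commute_of_zpow_commute_right htf y x t ht hc2.symm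
  exact hc3.symm.eq
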